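/- The function g(θ) := θ·H↓_{1+θ}(X|Y) = −log Σ_{x,y} P_XY(x,y)^{1+θ} P_Y(y)^{−θ}, extended by g(0)=0, is concave on (−1,∞), and it is strictly concave on (−1,∞) if and only if V(X|Y) > 0. -/

import Mathlib

open Real Filter Finset

private lemma sq_ident {ι : Type*} (S : Finset ι) (a w : ι → ℝ) :
    (∑ i ∈ S, a i) * (∑ i ∈ S, a i * w i ^ 2) - (∑ i ∈ S, a i * w i) ^ 2
      = (1/2) * ∑ i ∈ S, ∑ j ∈ S, a i * a j * (w i - w j) ^ 2 := by
  have h : ∀ i j, a i * a j * (w i - w j) ^ 2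
      = a i * (a j * w j ^ 2) + a i * w i ^ 2 * a j - 2 * (a i * w i) * (a j * w j) := by
    intros; ring
  simp_rw [h, Finset.sum_sub_distrib, Finset.sum_add_distrib, ← Finset.mul_sum,
    ← Finset.sum_mul]
  have : ∑ x ∈ S, 2 * (a x * w x) = 2 * ∑ x ∈ S, a x * w x := by
    rw [Finset.mul_sum]
  rw [this]; ring

private lemma hasDerivAt_Zaux {ι : Type*} (S : Finset ι) (p w : ι → ℝ) (θ : ℝ) :
    HasDerivAt (fun t => ∑ i ∈ S, p i * Real.exp (t * w i))
      (∑ i ∈ S, p i * w i * Real.exp (θ * w i)) θ := by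
  apply HasDerivAt.fun_sum
  intro i _
  have h : HasDerivAt (fun t : ℝ => t * w i) (w i) θ := by
    simpa using (hasDerivAt_id θ).mul_const (w i)
  have := (h.exp).const_mul (p i)
  convert this using 1
  · rfl
  ring

private lemma double_sum_nonneg {ι : Type*} (S : Finset ι) (a w : ι → ℝ)
    (ha : ∀ i ∈ S, 0 ≤ a i) :
    0 ≤ ∑ i ∈ S, ∑ j ∈ S, a i * a j * (w i - w j) ^ 2 :=
  Finset.sum_nonneg fun i hi => Finset.sum_nonneg fun j hj =>
    mul_nonneg (mul_nonneg (ha i hi) (ha j hj)) (sq_nonneg _)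

private lemma double_sum_pos {ι : Type*} (S : Finset ι) (a w : ι → ℝ)
    (ha : ∀ i ∈ S, 0 < a i) {i0 j0 : ι} (hi0 : i0 ∈ S) (hj0 : j0 ∈ S)
    (hne : w i0 ≠ w j0) :
    0 < ∑ i ∈ S, ∑ j ∈ S, a i * a j * (w i - w j) ^ 2 := by
  have hsub : w i0 - w j0 ≠ 0 := sub_ne_zero.mpr hne
  apply Finset.sum_pos'
  · intro i hi
    exact Finset.sum_nonneg fun j hj =>
      mul_nonneg (mul_nonneg (ha i hi).le (ha j hj).le) (sq_nonneg _)
  · refine ⟨i0, hi0, Finset.sum_pos' (fun j hj =>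
      mul_nonneg (mul_nonneg (ha i0 hi0).le (ha j hj).le) (sq_nonneg _)) ⟨j0, hj0, ?_⟩⟩
    have : (0:ℝ) < (w i0 - w j0) ^ 2 := by positivity
    exact mul_pos (mul_pos (ha i0 hi0) (ha j0 hj0)) this

private lemma cgf_main {ι : Type*} (S : Finset ι) (p w : ι → ℝ)
    (hp : ∀ i ∈ S, 0 < p i) (hne : S.Nonempty) :
    ConcaveOn ℝ (Set.Ioi (-1 : ℝ))
        (fun θ => -Real.log (∑ i ∈ S, p i * Real.exp (θ * w i)))
    ∧ (StrictConcaveOn ℝ (Set.Ioi (-1 : ℝ))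
          (fun θ => -Real.log (∑ i ∈ S, p i * Real.exp (θ * w i)))
        ↔ ∃ i ∈ S, ∃ j ∈ S, w i ≠ w j) := by
  set Z : ℝ → ℝ := fun θ => ∑ i ∈ S, p i * Real.exp (θ * w i) with hZdef
  set Z1 : ℝ → ℝ := fun θ => ∑ i ∈ S, p i * w i * Real.exp (θ * w i) with hZ1def
  set Z2 : ℝ → ℝ := fun θ => ∑ i ∈ S, p i * w i * w i * Real.exp (θ * w i) with hZ2def
  set g : ℝ → ℝ := fun θ => -Real.log (Z θ) with hgdef
  have Zpos : ∀ θ, 0 < Z θ := fun θ =>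
    Finset.sum_pos (fun i hi => mul_pos (hp i hi) (Real.exp_pos _)) hne
  have hZ : ∀ θ, HasDerivAt Z (Z1 θ) θ := fun θ => hasDerivAt_Zaux S p w θ
  have hZ1 : ∀ θ, HasDerivAt Z1 (Z2 θ) θ := fun θ =>
    hasDerivAt_Zaux S (fun i => p i * w i) w θ
  have hg1 : ∀ θ, HasDerivAt g (-(Z1 θ / Z θ)) θ := fun θ =>
    (((hZ θ).log (Zpos θ).ne')).neg
  have hderivg : deriv g = fun θ => -(Z1 θ / Z θ) := funext fun θ => (hg1 θ).deriv
  have hg2 : ∀ θ, HasDerivAt (fun t => -(Z1 t / Z t))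
      (-((Z2 θ * Z θ - Z1 θ * Z1 θ) / Z θ ^ 2)) θ := fun θ =>
    (((hZ1 θ).div (hZ θ) (Zpos θ).ne')).neg
  have hD2 : ∀ θ, deriv^[2] g θ = -((Z2 θ * Z θ - Z1 θ * Z1 θ) / Z θ ^ 2) := by
    intro θ
    have h0 : deriv^[2] g = deriv (deriv g) := rfl
    rw [h0, hderivg]
    exact (hg2 θ).deriv
  have hN : ∀ θ, Z2 θ * Z θ - Z1 θ * Z1 θ
      = (1/2) * ∑ i ∈ S, ∑ j ∈ S,
          (p i * Real.exp (θ * w i)) * (p j * Real.exp (θ * w j)) * (w i - w j) ^ 2 := by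
    intro θ
    have h := sq_ident S (fun i => p i * Real.exp (θ * w i)) w
    have e0 : (∑ i ∈ S, p i * Real.exp (θ * w i)) = Z θ := rfl
    have e2 : (∑ i ∈ S, (p i * Real.exp (θ * w i)) * w i ^ 2) = Z2 θ := by
      apply Finset.sum_congr rfl; intros; ring
    have e1 : (∑ i ∈ S, (p i * Real.exp (θ * w i)) * w i) = Z1 θ := by
      apply Finset.sum_congr rfl; intros; ring
    rw [e0, e2, e1] at h
    calc Z2 θ * Z θ - Z1 θ * Z1 θ = Z θ * Z2 θ - Z1 θ ^ 2 := by ring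
      _ = _ := h
  have hcont : ContinuousOn g (Set.Ioi (-1:ℝ)) := fun θ _ =>
    (hg1 θ).continuousAt.continuousWithinAt
  have hconc : ConcaveOn ℝ (Set.Ioi (-1:ℝ)) g := by
    apply concaveOn_of_deriv2_nonpos (convex_Ioi _) hcont
    · intro x _
      exact (hg1 x).differentiableAt.differentiableWithinAt
    · intro x _
      rw [hderivg]
      exact (hg2 x).differentiableAt.differentiableWithinAt
    · intro x _
      rw [hD2 x]
      have hnn : 0 ≤ Z2 x * Z x - Z1 x * Z1 x := by
        rw [hN x]
        have := double_sum_nonneg S (fun i => p i * Real.exp (x * w i)) w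
          (fun i hi => (mul_pos (hp i hi) (Real.exp_pos _)).le)
        linarith
      have h2 : (0:ℝ) < Z x ^ 2 := pow_pos (Zpos x) 2
      have : 0 ≤ (Z2 x * Z x - Z1 x * Z1 x) / Z x ^ 2 := div_nonneg hnn h2.le
      linarith
  refine ⟨hconc, ?_, ?_⟩
  · -- strict concave → exists
    intro hs
    by_contra hex
    push_neg at hex
    obtain ⟨i0, hi0⟩ := hne
    have hspos : 0 < ∑ i ∈ S, p i := Finset.sum_pos hp ⟨i0, hi0⟩
    have hglin : ∀ θ, g θ = -(Real.log (∑ i ∈ S, p i) + θ * w i0) := by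
      intro θ
      have hZc : Z θ = (∑ i ∈ S, p i) * Real.exp (θ * w i0) := by
        calc Z θ = ∑ i ∈ S, p i * Real.exp (θ * w i0) := by
              apply Finset.sum_congr rfl
              intro i hi
              rw [hex i hi i0 hi0]
          _ = (∑ i ∈ S, p i) * Real.exp (θ * w i0) := by rw [Finset.sum_mul]
      simp only [hgdef, hZc, Real.log_mul hspos.ne' (Real.exp_ne_zero _), Real.log_exp]
    have h01 : (0:ℝ) ∈ Set.Ioi (-1:ℝ) := by norm_num
    have h21 : (2:ℝ) ∈ Set.Ioi (-1:ℝ) := by norm_num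
    have hkey := hs.2 h01 h21 (by norm_num) (by norm_num : (0:ℝ) < 1/2)
      (by norm_num : (0:ℝ) < 1/2) (by norm_num : (1:ℝ)/2 + 1/2 = 1)
    simp only [smul_eq_mul] at hkey
    norm_num at hkey
    rw [hglin 0, hglin 2, hglin 1] at hkey
    norm_num at hkey
    linarith
  · -- exists → strict concave
    rintro ⟨i0, hi0, j0, hj0, hww⟩
    apply strictConcaveOn_of_deriv2_neg (convex_Ioi _) hcont
    intro x _
    rw [hD2 x]
    have hpos : 0 < Z2 x * Z x - Z1 x * Z1 x := by
      rw [hN x]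
      have := double_sum_pos S (fun i => p i * Real.exp (x * w i)) w
        (fun i hi => mul_pos (hp i hi) (Real.exp_pos _)) hi0 hj0 hww
      linarith
    have h2 : (0:ℝ) < Z x ^ 2 := pow_pos (Zpos x) 2
    have : 0 < (Z2 x * Z x - Z1 x * Z1 x) / Z x ^ 2 := div_pos hpos h2
    linarith

open Real Filter

/-- Marginal distribution on `𝒴`. -/
noncomputable def margY {𝒳 𝒴 : Type*} [Fintype 𝒳] (P : 𝒳 × 𝒴 → ℝ) (y : 𝒴) : ℝ :=
  ∑ x : 𝒳, P (x, y)

/-- `θ · H↓_{1+θ}(X|Y) = - log Σ P(x,y)^{1+θ} P_Y(y)^{-θ}` (which equals `0` at `θ = 0`). -/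
noncomputable def thetaCondRenyiDown {𝒳 𝒴 : Type*} [Fintype 𝒳] [Fintype 𝒴]
    (P : 𝒳 × 𝒴 → ℝ) (θ : ℝ) : ℝ :=
  -Real.log (∑ x : 𝒳, ∑ y : 𝒴,
    if 0 < P (x, y) then P (x, y) ^ (1 + θ) * margY P y ^ (-θ) else 0)

/-- Conditional entropy `H(X|Y)`. -/
noncomputable def condEnt {𝒳 𝒴 : Type*} [Fintype 𝒳] [Fintype 𝒴]
    (P : 𝒳 × 𝒴 → ℝ) : ℝ :=
  -∑ x : 𝒳, ∑ y : 𝒴,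
    if 0 < P (x, y) then P (x, y) * Real.log (P (x, y) / margY P y) else 0

/-- Conditional varentropy `V(X|Y)`. -/
noncomputable def condVarEnt {𝒳 𝒴 : Type*} [Fintype 𝒳] [Fintype 𝒴]
    (P : 𝒳 × 𝒴 → ℝ) : ℝ :=
  (∑ x : 𝒳, ∑ y : 𝒴,
    if 0 < P (x, y) then P (x, y) * (Real.log (P (x, y) / margY P y)) ^ 2 else 0)
  - (condEnt P) ^ 2

theorem thetaCondRenyiDown_concave_iff {𝒳 𝒴 : Type*} [Fintype 𝒳] [Fintype 𝒴]
    (P : 𝒳 × 𝒴 → ℝ) (hP0 : ∀ p, 0 ≤ P p) (hP1 : ∑ p : 𝒳 × 𝒴, P p = 1) :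
    ConcaveOn ℝ (Set.Ioi (-1 : ℝ)) (fun θ => thetaCondRenyiDown P θ)
    ∧ (StrictConcaveOn ℝ (Set.Ioi (-1 : ℝ)) (fun θ => thetaCondRenyiDown P θ)
        ↔ 0 < condVarEnt P) := by
  classical
  set S : Finset (𝒳 × 𝒴) := Finset.univ.filter (fun q => 0 < P q) with hSdef
  set w : 𝒳 × 𝒴 → ℝ := fun q => Real.log (P q / margY P q.2) with hwdef
  have hmemS : ∀ q, q ∈ S ↔ 0 < P q := by intro q; simp [hSdef]
  have hsum1 : ∑ q ∈ S, P q = 1 := by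
    rw [← hP1]
    apply Finset.sum_subset (Finset.filter_subset _ _)
    intro q _ hq
    exact le_antisymm (not_lt.1 (by simpa [hSdef] using hq)) (hP0 q)
  have hSne : S.Nonempty := by
    rw [Finset.nonempty_iff_ne_empty]
    intro h
    rw [h, Finset.sum_empty] at hsum1
    norm_num at hsum1
  have hMpos : ∀ q ∈ S, 0 < margY P q.2 := by
    intro q hq
    have h1 : P (q.1, q.2) ≤ margY P q.2 :=
      Finset.single_le_sum (f := fun x => P (x, q.2)) (fun i _ => hP0 _) (Finset.mem_univ q.1)
    have h2 : 0 < P q := (hmemS q).1 hq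
    calc (0:ℝ) < P q := h2
      _ = P (q.1, q.2) := by rw [Prod.mk.eta]
      _ ≤ margY P q.2 := h1
  -- rewrite the main function
  have key : (fun θ => thetaCondRenyiDown P θ)
      = fun θ => -Real.log (∑ q ∈ S, P q * Real.exp (θ * w q)) := by
    funext θ
    unfold thetaCondRenyiDown
    congr 1
    rw [show (∑ x : 𝒳, ∑ y : 𝒴,
        if 0 < P (x, y) then P (x, y) ^ (1 + θ) * margY P y ^ (-θ) else 0)
        = ∑ q : 𝒳 × 𝒴, (if 0 < P q then P q ^ (1 + θ) * margY P q.2 ^ (-θ) else 0)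
      from (Fintype.sum_prod_type
        (fun q : 𝒳 × 𝒴 => if 0 < P q then P q ^ (1 + θ) * margY P q.2 ^ (-θ) else 0)).symm]
    rw [← Finset.sum_filter, ← hSdef]
    congr 1
    apply Finset.sum_congr rfl
    intro q hq
    have hp : 0 < P q := (hmemS q).1 hq
    have hm : 0 < margY P q.2 := hMpos q hq
    rw [Real.rpow_def_of_pos hp, Real.rpow_def_of_pos hm, ← Real.exp_add, hwdef]
    have heq : P q * Real.exp (θ * Real.log (P q / margY P q.2))
        = Real.exp (Real.log (P q) + θ * Real.log (P q / margY P q.2)) := by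
      rw [Real.exp_add, Real.exp_log hp]
    rw [heq, Real.log_div hp.ne' hm.ne']
    congr 1
    ring
  -- entropy sums
  have hce : condEnt P = -∑ q ∈ S, P q * w q := by
    unfold condEnt
    congr 1
    rw [show (∑ x : 𝒳, ∑ y : 𝒴,
        if 0 < P (x, y) then P (x, y) * Real.log (P (x, y) / margY P y) else 0)
        = ∑ q : 𝒳 × 𝒴, (if 0 < P q then P q * Real.log (P q / margY P q.2) else 0)
      from (Fintype.sum_prod_type
        (fun q : 𝒳 × 𝒴 => if 0 < P q then P q * Real.log (P q / margY P q.2) else 0)).symm]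
    rw [← Finset.sum_filter, ← hSdef]
  have hv2 : condVarEnt P = (∑ q ∈ S, P q * w q ^ 2) - (∑ q ∈ S, P q * w q) ^ 2 := by
    unfold condVarEnt
    rw [hce, neg_sq]
    congr 1
    rw [show (∑ x : 𝒳, ∑ y : 𝒴,
        if 0 < P (x, y) then P (x, y) * (Real.log (P (x, y) / margY P y)) ^ 2 else 0)
        = ∑ q : 𝒳 × 𝒴, (if 0 < P q then P q * (Real.log (P q / margY P q.2)) ^ 2 else 0)
      from (Fintype.sum_prod_type
        (fun q : 𝒳 × 𝒴 => if 0 < P q then P q * (Real.log (P q / margY P q.2)) ^ 2 else 0)).symm]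
    rw [← Finset.sum_filter, ← hSdef]
  have hvar : condVarEnt P
      = (1/2) * ∑ i ∈ S, ∑ j ∈ S, P i * P j * (w i - w j) ^ 2 := by
    rw [hv2, ← sq_ident S P w, hsum1, one_mul]
  have hpS : ∀ q ∈ S, 0 < P q := fun q hq => (hmemS q).1 hq
  have hvar_iff : 0 < condVarEnt P ↔ ∃ i ∈ S, ∃ j ∈ S, w i ≠ w j := by
    constructor
    · intro hpos
      by_contra hex
      push_neg at hex
      rw [hvar] at hpos
      have hzero : ∑ i ∈ S, ∑ j ∈ S, P i * P j * (w i - w j) ^ 2 = 0 := by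
        apply Finset.sum_eq_zero
        intro i hi
        apply Finset.sum_eq_zero
        intro j hj
        rw [hex i hi j hj]
        ring
      rw [hzero] at hpos
      norm_num at hpos
    · rintro ⟨i0, hi0, j0, hj0, hww⟩
      rw [hvar]
      have := double_sum_pos S P w hpS hi0 hj0 hww
      linarith
  have hmain := cgf_main S P w hpS hSne
  rw [key, hvar_iff]
  exact hmain
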